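/- arXiv:math-ph/0605070 — 2 statements merged into one kernel-verified Lean document; each statement's English description precedes it below -/
import Mathlib

section
/- Let Φ : [0,∞) → [0,∞) be C¹, strictly convex, Φ(0)=Φ'(0)=0, superlinear at infinity, extended by +∞ on (-∞,0). For r ≥ 0 define Ψ(r) := inf over g ∈ L¹₊(ℝ²) with ∫g = r of ∫_{ℝ²} ((1/2)|v|² g(v) + Φ(g(v))) dv, extended by +∞ on (-∞,0). Then for every λ ∈ ℝ the Legendre transform satisfies Ψ*(λ) = ∫_{ℝ²} Φ*(λ - |v|²/2) dv, where h*(λ) := sup_{r∈ℝ}(λr - h(r)). -/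
open MeasureTheory Real Set Filter Topology

noncomputable section

abbrev E2 := EuclideanSpace ℝ (Fin 2)

/-- Legendre transform of a function extended by +∞ on the negative half-line,
so the supremum is effectively taken over r ≥ 0. -/
def legendre (h : ℝ → ℝ) (lam : ℝ) : ℝ :=
  sSup {y : ℝ | ∃ r : ℝ, 0 ≤ r ∧ y = lam * r - h r}

/-- The reduced function Ψ obtained from Φ by minimizing over velocity profiles. -/
def redPsi (Φ : ℝ → ℝ) (r : ℝ) : ℝ :=
  sInf {y : ℝ | ∃ g : E2 → ℝ, (∀ v, 0 ≤ g v) ∧ Integrable g ∧ (∫ v, g v) = r ∧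
    Integrable (fun v : E2 => (1/2) * ‖v‖^2 * g v + Φ (g v)) ∧
    y = ∫ v : E2, ((1/2) * ‖v‖^2 * g v + Φ (g v))}

/-- Generalized inverse of Φ' on the nonnegative half-line. -/
def ginvD (Φ' : ℝ → ℝ) (μ : ℝ) : ℝ := sInf {s : ℝ | 0 ≤ s ∧ μ ≤ Φ' s}

section Aux
variable {Φ Φ' : ℝ → ℝ}
variable (hderiv : ∀ x ∈ Ici (0:ℝ), HasDerivWithinAt Φ (Φ' x) (Ici 0) x)
  (hcont : ContinuousOn Φ' (Ici 0))
  (hconv : StrictConvexOn ℝ (Ici 0) Φ)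
  (hmap : MapsTo Φ (Ici 0) (Ici 0))
  (h0 : Φ 0 = 0) (h0' : Φ' 0 = 0)
  (hsup : Tendsto (fun η => Φ η / η) atTop atTop)

include hderiv hconv in
theorem tangent {a b : ℝ} (ha : 0 ≤ a) (hb : 0 ≤ b) :
    Φ a + Φ' a * (b - a) ≤ Φ b := by
  rcases lt_trichotomy a b with h | rfl | h
  · have := hconv.convexOn.le_slope_of_hasDerivWithinAt (mem_Ici.2 ha) (mem_Ici.2 hb) h
      (hderiv a ha)
    rw [slope_def_field, le_div_iff₀ (by linarith)] at this
    nlinarith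
  · simp
  · have := hconv.convexOn.slope_le_of_hasDerivWithinAt (mem_Ici.2 hb) (mem_Ici.2 ha) h
      (hderiv a ha)
    rw [slope_def_field, div_le_iff₀ (by linarith)] at this
    nlinarith

include hderiv hconv in
theorem phi'_mono : MonotoneOn Φ' (Ici 0) := by
  intro a ha b hb hab
  rcases eq_or_lt_of_le hab with rfl | h
  · exact le_refl _
  · exact (hconv.convexOn.le_slope_of_hasDerivWithinAt ha hb h (hderiv a ha)).trans
      (hconv.convexOn.slope_le_of_hasDerivWithinAt ha hb h (hderiv b hb))

include hderiv hconv h0' in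
theorem phi'_nonneg {a : ℝ} (ha : 0 ≤ a) : 0 ≤ Φ' a := by
  rw [← h0']; exact phi'_mono hderiv hconv (mem_Ici.2 (le_refl 0)) ha ha

include hderiv hconv h0' in
theorem phi_monoOn : MonotoneOn Φ (Ici 0) := by
  intro a ha b hb hab
  have ht := tangent hderiv hconv (mem_Ici.1 ha) (mem_Ici.1 hb)
  nlinarith [phi'_nonneg hderiv hconv h0' (mem_Ici.1 ha)]

include hderiv hconv h0 hsup in
theorem phi'_top : Tendsto Φ' atTop atTop := by
  apply tendsto_atTop_mono' atTop (Eventually.mono (eventually_gt_atTop 0) ?_) hsup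
  intro x hx
  have ht := tangent hderiv hconv (le_of_lt hx) (le_refl 0)
  rw [h0] at ht
  rw [div_le_iff₀ hx]
  nlinarith

include hderiv hconv h0 hsup in
theorem ginv_set_nonempty (μ : ℝ) : {s : ℝ | 0 ≤ s ∧ μ ≤ Φ' s}.Nonempty := by
  obtain ⟨x, hx1, hx2⟩ :=
    (((phi'_top hderiv hconv h0 hsup).eventually_ge_atTop μ).and (eventually_ge_atTop 0)).exists
  exact ⟨x, hx2, hx1⟩

theorem ginv_set_bddBelow (μ : ℝ) : BddBelow {s : ℝ | 0 ≤ s ∧ μ ≤ Φ' s} :=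
  ⟨0, fun _ hb => hb.1⟩

include hderiv hconv h0 hsup in
theorem ginv_nonneg (μ : ℝ) : 0 ≤ ginvD Φ' μ :=
  le_csInf (ginv_set_nonempty hderiv hconv h0 hsup μ) fun _ hb => hb.1

include hderiv hconv h0 h0' hsup in
theorem ginv_of_nonpos {μ : ℝ} (hμ : μ ≤ 0) : ginvD Φ' μ = 0 :=
  le_antisymm (csInf_le (ginv_set_bddBelow μ) ⟨le_refl 0, by rw [h0']; exact hμ⟩)
    (ginv_nonneg hderiv hconv h0 hsup μ)

include hderiv hconv h0 hsup in
theorem ginv_mono : Monotone (ginvD Φ') := by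
  intro a b hab
  exact csInf_le_csInf (ginv_set_bddBelow a) (ginv_set_nonempty hderiv hconv h0 hsup b)
    fun s hs => ⟨hs.1, hab.trans hs.2⟩

include hderiv hcont hconv h0 h0' hsup in
theorem phi'_ginv {μ : ℝ} (hμ : 0 ≤ μ) : Φ' (ginvD Φ' μ) = μ := by
  set A := {s : ℝ | 0 ≤ s ∧ μ ≤ Φ' s} with hA
  have hAne := ginv_set_nonempty hderiv hconv h0 hsup μ
  have hg0 : 0 ≤ ginvD Φ' μ := ginv_nonneg hderiv hconv h0 hsup μ
  have hAcl : IsClosed A := by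
    have : A = Ici 0 ∩ Φ' ⁻¹' (Ici μ) := by ext s; simp [hA, and_comm]
    rw [this]
    exact ContinuousOn.preimage_isClosed_of_isClosed hcont isClosed_Ici isClosed_Ici
  have hmem : ginvD Φ' μ ∈ A := hAcl.csInf_mem hAne (ginv_set_bddBelow μ)
  refine le_antisymm ?_ hmem.2
  rcases eq_or_lt_of_le hg0 with heq | hg
  · rw [← heq, h0']; exact hμ
  · have hten : Tendsto Φ' (𝓝[Ico 0 (ginvD Φ' μ)] (ginvD Φ' μ)) (𝓝 (Φ' (ginvD Φ' μ))) :=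
      (hcont _ hg0).mono_left (nhdsWithin_mono _ Ico_subset_Ici_self)
    rw [nhdsWithin_Ico_eq_nhdsLT hg] at hten
    refine le_of_tendsto hten ?_
    rw [← nhdsWithin_Ico_eq_nhdsLT hg]
    refine eventually_nhdsWithin_of_forall fun s hs => ?_
    by_contra hc
    exact absurd (csInf_le (ginv_set_bddBelow μ) ⟨hs.1, le_of_not_ge hc⟩) (not_le.2 hs.2)

include hderiv hcont hconv hmap h0 h0' hsup in
theorem legendre_isGreatest (μ : ℝ) :
    IsGreatest {y : ℝ | ∃ r : ℝ, 0 ≤ r ∧ y = μ * r - Φ r}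
      (μ * ginvD Φ' μ - Φ (ginvD Φ' μ)) := by
  constructor
  · exact ⟨ginvD Φ' μ, ginv_nonneg hderiv hconv h0 hsup μ, rfl⟩
  · rintro y ⟨r, hr, rfl⟩
    rcases le_or_gt μ 0 with hμ | hμ
    · rw [ginv_of_nonpos hderiv hconv h0 h0' hsup hμ, h0]
      have h1 : μ * r ≤ 0 := mul_nonpos_of_nonpos_of_nonneg hμ hr
      have h2 : 0 ≤ Φ r := hmap hr
      nlinarith
    · have hg0 : 0 ≤ ginvD Φ' μ := ginv_nonneg hderiv hconv h0 hsup μ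
      have ht := tangent hderiv hconv hg0 hr
      rw [phi'_ginv hderiv hcont hconv h0 h0' hsup (le_of_lt hμ)] at ht
      nlinarith

include hderiv hcont hconv hmap h0 h0' hsup in
theorem legendre_eq (μ : ℝ) :
    legendre Φ μ = μ * ginvD Φ' μ - Φ (ginvD Φ' μ) :=
  (legendre_isGreatest hderiv hcont hconv hmap h0 h0' hsup μ).csSup_eq

end Aux

/-- A measurable, nonnegative, bounded function vanishing off a ball is integrable. -/
theorem integrable_of_bound {f : E2 → ℝ} (hf : Measurable f) (hf0 : ∀ v, 0 ≤ f v) {M R : ℝ}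
    (hM : ∀ v, f v ≤ M) (hR : ∀ v, v ∉ Metric.closedBall (0:E2) R → f v = 0) :
    Integrable f := by
  have hind : Integrable ((Metric.closedBall (0:E2) R).indicator (fun _ => M)) := by
    rw [integrable_indicator_iff Metric.isClosed_closedBall.measurableSet]
    exact integrableOn_const measure_closedBall_lt_top.ne
  refine hind.mono' hf.aestronglyMeasurable (Eventually.of_forall fun v => ?_)
  rw [Real.norm_of_nonneg (hf0 v)]
  by_cases hv : v ∈ Metric.closedBall (0:E2) R
  · simpa [hv] using hM v
  · simp [hv, hR v hv]

theorem stmt5 (Φ Φ' : ℝ → ℝ)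
    (hderiv : ∀ x ∈ Ici (0:ℝ), HasDerivWithinAt Φ (Φ' x) (Ici 0) x)
    (hcont : ContinuousOn Φ' (Ici 0))
    (hconv : StrictConvexOn ℝ (Ici 0) Φ)
    (hmap : MapsTo Φ (Ici 0) (Ici 0))
    (h0 : Φ 0 = 0) (h0' : Φ' 0 = 0)
    (hsup : Tendsto (fun η => Φ η / η) atTop atTop) :
    ∀ lam : ℝ, legendre (redPsi Φ) lam = ∫ v : E2, legendre Φ (lam - ‖v‖^2 / 2) := by
  intro lam
  -- the optimal profile
  set g : E2 → ℝ := fun v => ginvD Φ' (lam - ‖v‖^2 / 2) with hgdef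
  have hμc : Continuous (fun v : E2 => lam - ‖v‖^2 / 2) :=
    continuous_const.sub ((continuous_norm.pow 2).div_const 2)
  have hg0 : ∀ v, 0 ≤ g v := fun v => ginv_nonneg hderiv hconv h0 hsup _
  have hgm : Measurable g :=
    ((ginv_mono hderiv hconv h0 hsup).measurable).comp hμc.measurable
  set C : ℝ := ginvD Φ' lam with hC
  have hC0 : 0 ≤ C := ginv_nonneg hderiv hconv h0 hsup lam
  have hgC : ∀ v, g v ≤ C := by
    intro v
    exact ginv_mono hderiv hconv h0 hsup (by nlinarith [sq_nonneg ‖v‖])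
  set R : ℝ := Real.sqrt (2 * max lam 0) with hRdef
  have hR0 : 0 ≤ R := Real.sqrt_nonneg _
  have hRsq : R ^ 2 = 2 * max lam 0 := Real.sq_sqrt (by positivity)
  have hsupp : ∀ v : E2, v ∉ Metric.closedBall (0:E2) R → g v = 0 := by
    intro v hv
    rw [Metric.mem_closedBall, dist_zero_right, not_le] at hv
    refine ginv_of_nonpos hderiv hconv h0 h0' hsup ?_
    have h1 : R ^ 2 < ‖v‖ ^ 2 := by nlinarith
    have h2 : 2 * lam ≤ R ^ 2 := by rw [hRsq]; nlinarith [le_max_left lam (0:ℝ)]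
    nlinarith
  -- continuity of Φ on the closed half-line
  have hΦcont : ContinuousOn Φ (Ici 0) := fun x hx => (hderiv x hx).continuousWithinAt
  have htilde : Continuous (fun t : ℝ => Φ (max t 0)) :=
    hΦcont.comp_continuous (continuous_id.max continuous_const) fun t => mem_Ici.2 (le_max_right _ _)
  have hΦg_eq : (fun v => Φ (g v)) = (fun t : ℝ => Φ (max t 0)) ∘ g := by
    funext v; simp [Function.comp, max_eq_left (hg0 v)]
  have hΦgm : Measurable fun v => Φ (g v) := by
    rw [hΦg_eq]; exact htilde.measurable.comp hgm
  have hΦg0 : ∀ v, 0 ≤ Φ (g v) := fun v => hmap (hg0 v)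
  have hΦgC : ∀ v, Φ (g v) ≤ Φ C := fun v =>
    phi_monoOn hderiv hconv h0' (hg0 v) hC0 (hgC v)
  -- integrability of the pieces
  have Ig : Integrable g := integrable_of_bound hgm hg0 hgC hsupp
  have IΦg : Integrable fun v => Φ (g v) :=
    integrable_of_bound hΦgm hΦg0 hΦgC fun v hv => by rw [hsupp v hv, h0]
  have IKg : Integrable fun v : E2 => (1/2) * ‖v‖^2 * g v := by
    refine integrable_of_bound (by fun_prop)
      (fun v => mul_nonneg (by positivity) (hg0 v))
      (M := (1/2) * R^2 * C) (R := R) (fun v => ?_) (fun v hv => by rw [hsupp v hv]; ring)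
    by_cases hv : v ∈ Metric.closedBall (0:E2) R
    · rw [Metric.mem_closedBall, dist_zero_right] at hv
      have hv2 : ‖v‖^2 ≤ R^2 := by nlinarith [norm_nonneg v]
      have := mul_le_mul hv2 (hgC v) (hg0 v) (sq_nonneg R)
      linarith
    · rw [hsupp v hv]
      nlinarith [mul_nonneg (mul_nonneg (sq_nonneg R) hC0) (by norm_num : (0:ℝ) ≤ 1/2)]
  have Isum : Integrable fun v : E2 => (1/2) * ‖v‖^2 * g v + Φ (g v) := IKg.add IΦg
  set r₀ : ℝ := ∫ v, g v with hr₀def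
  have hr₀ : 0 ≤ r₀ := integral_nonneg hg0
  set I₀ : ℝ := ∫ v : E2, ((1/2) * ‖v‖^2 * g v + Φ (g v)) with hI₀def
  set Jval : ℝ := lam * r₀ - I₀ with hJdef
  -- the right-hand side equals Jval
  have hFpt : ∀ v : E2, legendre Φ (lam - ‖v‖^2 / 2) =
      lam * g v - ((1/2) * ‖v‖^2 * g v + Φ (g v)) := by
    intro v
    rw [legendre_eq hderiv hcont hconv hmap h0 h0' hsup (lam - ‖v‖^2 / 2)]
    show (lam - ‖v‖^2/2) * g v - Φ (g v) = _
    ring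
  have hRHS : (∫ v : E2, legendre Φ (lam - ‖v‖^2 / 2)) = Jval := by
    rw [hJdef, hr₀def, hI₀def, ← integral_const_mul, ← integral_sub (Ig.const_mul lam) Isum]
    exact integral_congr_ae (Eventually.of_forall fun v => hFpt v)
  rw [hRHS]
  -- upper bound for any admissible pair
  have hub : ∀ r : ℝ, 0 ≤ r → ∀ y ∈ {y : ℝ | ∃ gg : E2 → ℝ, (∀ v, 0 ≤ gg v) ∧ Integrable gg ∧
      (∫ v, gg v) = r ∧
      Integrable (fun v : E2 => (1/2) * ‖v‖^2 * gg v + Φ (gg v)) ∧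
      y = ∫ v : E2, ((1/2) * ‖v‖^2 * gg v + Φ (gg v))}, lam * r - y ≤ Jval := by
    rintro r hr y ⟨gg, hgg0, hggI, hggr, hggS, rfl⟩
    have : lam * r - (∫ v : E2, ((1/2) * ‖v‖^2 * gg v + Φ (gg v)))
        = ∫ v : E2, (lam * gg v - ((1/2) * ‖v‖^2 * gg v + Φ (gg v))) := by
      rw [integral_sub (hggI.const_mul lam) hggS, integral_const_mul, hggr]
    rw [this, ← hRHS]
    refine integral_mono ((hggI.const_mul lam).sub hggS)
      ((Ig.const_mul lam).sub Isum |>.congr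
        (Eventually.of_forall fun v => (hFpt v).symm)) fun v => ?_
    show lam * gg v - ((1/2) * ‖v‖^2 * gg v + Φ (gg v)) ≤ legendre Φ (lam - ‖v‖^2/2)
    have key : (lam - ‖v‖^2/2) * gg v - Φ (gg v) ≤ legendre Φ (lam - ‖v‖^2/2) := by
      rw [legendre_eq hderiv hcont hconv hmap h0 h0' hsup (lam - ‖v‖^2/2)]
      exact (legendre_isGreatest hderiv hcont hconv hmap h0 h0' hsup
        (lam - ‖v‖^2/2)).2 ⟨gg v, hgg0 v, rfl⟩
    calc lam * gg v - ((1/2) * ‖v‖^2 * gg v + Φ (gg v))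
        = (lam - ‖v‖^2/2) * gg v - Φ (gg v) := by ring
      _ ≤ _ := key
  -- nonemptiness of the admissible set for each r ≥ 0
  have hSne : ∀ r : ℝ, 0 ≤ r → ∃ y, y ∈ {y : ℝ | ∃ gg : E2 → ℝ, (∀ v, 0 ≤ gg v) ∧ Integrable gg ∧
      (∫ v, gg v) = r ∧
      Integrable (fun v : E2 => (1/2) * ‖v‖^2 * gg v + Φ (gg v)) ∧
      y = ∫ v : E2, ((1/2) * ‖v‖^2 * gg v + Φ (gg v))} := by
    intro r hr
    set c : ℝ := (volume (Metric.closedBall (0:E2) 1)).toReal with hcdef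
    have hc : 0 < c := by
      rw [hcdef]
      refine ENNReal.toReal_pos ?_ measure_closedBall_lt_top.ne
      exact (Metric.measure_closedBall_pos volume (0:E2) one_pos).ne'
    set gg : E2 → ℝ := (Metric.closedBall (0:E2) 1).indicator (fun _ => r / c) with hggdef
    have hgg0 : ∀ v, 0 ≤ gg v := fun v =>
      Set.indicator_nonneg (fun _ _ => div_nonneg hr hc.le) v
    have hggC : ∀ v, gg v ≤ r / c := by
      intro v
      by_cases hv : v ∈ Metric.closedBall (0:E2) 1
      · rw [hggdef, Set.indicator_of_mem hv]
      · rw [hggdef, Set.indicator_of_notMem hv]; exact div_nonneg hr hc.le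
    have hggsupp : ∀ v : E2, v ∉ Metric.closedBall (0:E2) 1 → gg v = 0 := fun v hv =>
      Set.indicator_of_notMem hv _
    have hggm : Measurable gg :=
      (measurable_const.indicator Metric.isClosed_closedBall.measurableSet)
    have hggI : Integrable gg := integrable_of_bound hggm hgg0 hggC hggsupp
    have hggr : (∫ v, gg v) = r := by
      rw [hggdef, integral_indicator_const _ Metric.isClosed_closedBall.measurableSet]
      simp only [smul_eq_mul, measureReal_def, ← hcdef]
      field_simp
    have hΦgg : (fun v => Φ (gg v)) =
        (Metric.closedBall (0:E2) 1).indicator (fun _ => Φ (r / c)) := by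
      funext v
      by_cases hv : v ∈ Metric.closedBall (0:E2) 1
      · simp [hggdef, Set.indicator_of_mem hv]
      · simp [hggdef, Set.indicator_of_notMem hv, h0]
    have hΦrc : 0 ≤ Φ (r / c) := hmap (mem_Ici.2 (div_nonneg hr hc.le))
    have hggS : Integrable fun v : E2 => (1/2) * ‖v‖^2 * gg v + Φ (gg v) := by
      refine integrable_of_bound ?_ (fun v => ?_) (M := (1/2) * 1^2 * (r/c) + Φ (r/c))
        (R := 1) (fun v => ?_) (fun v hv => ?_)
      · have hm2 : Measurable fun v => Φ (gg v) := by
          rw [hΦgg]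
          exact measurable_const.indicator Metric.isClosed_closedBall.measurableSet
        exact ((measurable_norm.pow measurable_const).const_mul _ |>.mul hggm).add hm2
      · have h1 := hgg0 v
        have h2 : (0:ℝ) ≤ Φ (gg v) := hmap (hgg0 v)
        exact add_nonneg (mul_nonneg (by positivity) h1) h2
      · by_cases hv : v ∈ Metric.closedBall (0:E2) 1
        · rw [Metric.mem_closedBall, dist_zero_right] at hv
          have h1 := hgg0 v
          have h2 := hggC v
          have h3 : Φ (gg v) ≤ Φ (r/c) := by
            have := congrFun hΦgg v
            by_cases hv' : v ∈ Metric.closedBall (0:E2) 1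
            · rw [this, Set.indicator_of_mem hv']
            · rw [this, Set.indicator_of_notMem hv']; exact hΦrc
          have hv2 : ‖v‖^2 ≤ 1 := by nlinarith [norm_nonneg v]
          have h5 : ‖v‖^2 * gg v ≤ 1 * (r/c) := mul_le_mul hv2 h2 h1 zero_le_one
          have : (1:ℝ)/2 * ‖v‖^2 * gg v ≤ 1/2 * (1 * (r/c)) := by linarith
          nlinarith
        · rw [hggsupp v hv, h0]
          have h4 : (0:ℝ) ≤ r / c := by positivity
          nlinarith
      · rw [hggsupp v hv, h0]; ring
    exact ⟨_, gg, hgg0, hggI, hggr, hggS, rfl⟩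
  -- all admissible values are nonnegative
  have hSnn : ∀ r : ℝ, ∀ y ∈ {y : ℝ | ∃ gg : E2 → ℝ, (∀ v, 0 ≤ gg v) ∧ Integrable gg ∧
      (∫ v, gg v) = r ∧
      Integrable (fun v : E2 => (1/2) * ‖v‖^2 * gg v + Φ (gg v)) ∧
      y = ∫ v : E2, ((1/2) * ‖v‖^2 * gg v + Φ (gg v))}, 0 ≤ y := by
    rintro r y ⟨gg, hgg0, _, _, _, rfl⟩
    refine integral_nonneg fun v => ?_
    have h1 := hgg0 v
    have h2 : (0:ℝ) ≤ Φ (gg v) := hmap (hgg0 v)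
    positivity
  -- the key bounds on redPsi
  have hΨub : ∀ r : ℝ, 0 ≤ r → lam * r - redPsi Φ r ≤ Jval := by
    intro r hr
    have h1 : lam * r - Jval ≤ redPsi Φ r :=
      le_csInf (hSne r hr) fun y hy => by linarith [hub r hr y hy]
    linarith
  have hΨr₀ : redPsi Φ r₀ ≤ I₀ :=
    csInf_le ⟨0, fun y hy => hSnn r₀ y hy⟩ ⟨g, hg0, Ig, rfl, Isum, rfl⟩
  -- conclude
  have hTne : (lam * r₀ - redPsi Φ r₀) ∈
      {y : ℝ | ∃ r : ℝ, 0 ≤ r ∧ y = lam * r - redPsi Φ r} := ⟨r₀, hr₀, rfl⟩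
  have hTbdd : BddAbove {y : ℝ | ∃ r : ℝ, 0 ≤ r ∧ y = lam * r - redPsi Φ r} :=
    ⟨Jval, by rintro y ⟨r, hr, rfl⟩; exact hΨub r hr⟩
  refine le_antisymm (csSup_le ⟨_, hTne⟩ ?_) ?_
  · rintro y ⟨r, hr, rfl⟩; exact hΨub r hr
  · calc Jval = lam * r₀ - I₀ := rfl
      _ ≤ lam * r₀ - redPsi Φ r₀ := by linarith
      _ ≤ _ := le_csSup hTbdd hTne

end
end

section
/- Let k > 0, n = k+1, and C > 0. If Φ(f) = C f^{1+1/k} for all f ≥ 0, then the reduced function Ψ(ρ) := inf_{g ∈ G_ρ} ∫_{ℝ²}((1/2)|v|²g + Φ(g)) dv satisfies Ψ(ρ) = C' ρ^{1+1/n} for all ρ ≥ 0 and some constant C' > 0 depending only on C and k. -/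
open MeasureTheory Real Set Filter

noncomputable section

open Pointwise

namespace Stmt7Aux

/-- The admissible-energy set. -/
def SS (C k r : ℝ) : Set ℝ :=
  {y : ℝ | ∃ g : E2 → ℝ, (∀ v, 0 ≤ g v) ∧ Integrable g ∧ (∫ v, g v) = r ∧
    Integrable (fun v : E2 => (1/2) * ‖v‖^2 * g v + C * (g v) ^ (1 + 1/k)) ∧
    y = ∫ v : E2, ((1/2) * ‖v‖^2 * g v + C * (g v) ^ (1 + 1/k))}

variable {k C : ℝ}

lemma SS_nonneg (hC : 0 < C) {r y : ℝ} (hy : y ∈ SS C k r) : 0 ≤ y := by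
  obtain ⟨g, hg0, -, -, -, hfy⟩ := hy
  rw [hfy]
  refine integral_nonneg fun v => ?_
  have := hg0 v
  positivity

lemma SS_bddBelow (hC : 0 < C) (r : ℝ) : BddBelow (SS C k r) :=
  ⟨0, fun y hy => SS_nonneg hC hy⟩

lemma scale_mem (hk : 0 < k) (hC : 0 < C) {a r y : ℝ} (ha : 0 < a)
    (hy : y ∈ SS C k r) :
    (a * a ^ (1/k) * a ^ (1/k)) * y ∈ SS C k (a * a ^ (1/k) * r) := by
  obtain ⟨g, hg0, hgi, hgm, hfi, hfy⟩ := hy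
  set b : ℝ := a ^ (1/(2*k)) with hbdef
  have hb : 0 < b := rpow_pos_of_pos ha _
  have hb2 : b ^ 2 = a ^ (1/k) := by
    rw [hbdef, ← rpow_natCast (a ^ (1/(2*k))) 2, ← rpow_mul ha.le]
    norm_num
    congr 1
    ring
  have hfin : Module.finrank ℝ E2 = 2 := finrank_euclideanSpace_fin
  have hcomp : ∀ F : E2 → ℝ, (∫ v, F (b⁻¹ • v)) = b ^ 2 * ∫ v, F v := by
    intro F
    rw [Measure.integral_comp_inv_smul volume F b, hfin, smul_eq_mul,
      abs_of_nonneg (pow_nonneg hb.le 2)]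
  have hcompi : ∀ F : E2 → ℝ, Integrable F → Integrable (fun v => F (b⁻¹ • v)) := by
    intro F hF
    exact (integrable_comp_smul_iff volume F (inv_ne_zero hb.ne')).2 hF
  refine ⟨fun v => a * g (b⁻¹ • v), fun v => mul_nonneg ha.le (hg0 _),
    (hcompi g hgi).const_mul a, ?_, ?_, ?_⟩
  · rw [integral_const_mul, hcomp g, hgm, hb2]; ring
  all_goals {
    have key : (fun v : E2 => (1/2) * ‖v‖^2 * (a * g (b⁻¹ • v)) + C * (a * g (b⁻¹ • v)) ^ (1 + 1/k))
        = fun v => (a * b ^ 2) *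
          ((1/2) * ‖b⁻¹ • v‖^2 * g (b⁻¹ • v) + C * (g (b⁻¹ • v)) ^ (1 + 1/k)) := by
      funext v
      have hnorm : ‖b⁻¹ • v‖ = b⁻¹ * ‖v‖ := by
        rw [norm_smul, Real.norm_eq_abs, abs_of_pos (inv_pos.2 hb)]
      have hpow : (a * g (b⁻¹ • v)) ^ (1 + 1/k) = a ^ (1 + 1/k) * (g (b⁻¹ • v)) ^ (1 + 1/k) :=
        mul_rpow ha.le (hg0 _)
      have hap : a ^ (1 + 1/k) = a * b ^ 2 := by rw [hb2, rpow_add ha, rpow_one]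
      rw [hpow, hap, hnorm]
      have hb0 : b ≠ 0 := hb.ne'
      field_simp
    first
    | · rw [key]
        exact ((hcompi _ hfi).const_mul (a * b ^ 2))
    | · rw [hfy, key, integral_const_mul,
          hcomp (fun w : E2 => (1/2) * ‖w‖^2 * g w + C * (g w) ^ (1 + 1/k)), ← hb2]
        ring }


lemma SS_one_nonempty (hk : 0 < k) (hC : 0 < C) : (SS C k 1).Nonempty := by
  have hp0 : (1 : ℝ) + 1/k ≠ 0 := by positivity
  have hz : (0:ℝ) ^ (1 + k⁻¹) = 0 := Real.zero_rpow (by positivity)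
  set s : Set E2 := Metric.ball 0 1 with hs
  have hms : MeasurableSet s := measurableSet_ball
  have hvs : volume s < ⊤ := measure_ball_lt_top
  set V : ℝ := (volume s).toReal with hV
  have hV0 : 0 < V := ENNReal.toReal_pos (Metric.measure_ball_pos volume (0:E2) one_pos).ne' hvs.ne
  set g : E2 → ℝ := s.indicator (fun _ => V⁻¹) with hg
  have hg0 : ∀ v, 0 ≤ g v := fun v => indicator_nonneg (fun _ _ => by positivity) v
  have hgi : Integrable g := by
    rw [hg, integrable_indicator_iff hms]
    exact integrableOn_const hvs.ne
  have hkey : (fun v : E2 => (1/2) * ‖v‖^2 * g v + C * (g v) ^ (1 + 1/k))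
      = s.indicator (fun v => (1/2) * ‖v‖^2 * V⁻¹ + C * V⁻¹ ^ (1 + 1/k)) := by
    funext v
    by_cases hv : v ∈ s
    · simp [hg, indicator_of_mem hv]
    · simp [hg, indicator_of_notMem hv, hz]
  have hfi : Integrable (fun v : E2 => (1/2) * ‖v‖^2 * g v + C * (g v) ^ (1 + 1/k)) := by
    rw [hkey, integrable_indicator_iff hms]
    refine IntegrableOn.mono_set ?_ Metric.ball_subset_closedBall
    refine ContinuousOn.integrableOn_compact (isCompact_closedBall 0 1) ?_
    exact (Continuous.continuousOn (by continuity))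
  refine ⟨∫ v : E2, ((1/2) * ‖v‖^2 * g v + C * (g v) ^ (1 + 1/k)), g, hg0, hgi, ?_, hfi, rfl⟩
  rw [hg, integral_indicator_const _ hms, smul_eq_mul, measureReal_def, ← hV, mul_inv_cancel₀ hV0.ne']

lemma SS_zero (hk : 0 < k) (hC : 0 < C) : SS C k 0 = {0} := by
  have hp0 : (1 : ℝ) + 1/k ≠ 0 := by positivity
  have hz : (0:ℝ) ^ (1 + k⁻¹) = 0 := Real.zero_rpow (by positivity)
  apply Subset.antisymm
  · rintro y ⟨g, hg0, hgi, hgm, hfi, hfy⟩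
    have hgz : g =ᵐ[volume] 0 :=
      (integral_eq_zero_iff_of_nonneg hg0 hgi).1 hgm
    have : (fun v : E2 => (1/2) * ‖v‖^2 * g v + C * (g v) ^ (1 + 1/k)) =ᵐ[volume] 0 := by
      filter_upwards [hgz] with v hv
      simp [hv, hz]
    simp only [mem_singleton_iff, hfy]
    rw [integral_congr_ae this]; simp
  · rintro y (rfl : y = 0)
    refine ⟨fun _ => 0, fun _ => le_refl 0, integrable_zero _ _ _, by simp, ?_, ?_⟩
    · simpa [hz] using (integrable_zero E2 ℝ volume)
    · simp [hz]


lemma pointwise_young (hk : 0 < k) (hC : 0 < C) :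
    ∃ c₀ : ℝ, 0 < c₀ ∧ ∀ s r : ℝ, 0 ≤ r →
      s * r ≤ C * r ^ (1 + 1/k) + c₀ * (max s 0) ^ (k + 1) := by
  set p : ℝ := 1 + 1/k with hpdef
  set q : ℝ := k + 1 with hqdef
  have hpq : p.HolderConjugate q := by
    rw [Real.holderConjugate_iff]
    constructor
    · have : 0 < 1/k := by positivity
      rw [hpdef]; linarith
    · rw [hpdef, hqdef]
      field_simp
  have hp : 0 < p := hpq.pos
  have hq : 0 < q := hpq.symm.pos
  have hCp : 0 < C * p := by positivity
  set α : ℝ := (C * p) ^ (-(1/p)) with hα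
  have hα0 : 0 < α := rpow_pos_of_pos hCp _
  have hαp : α ^ p = (C * p)⁻¹ := by
    rw [hα, ← rpow_mul hCp.le]
    have : -(1/p) * p = -1 := by field_simp
    rw [this, rpow_neg_one]
  refine ⟨α ^ q / q, by positivity, ?_⟩
  intro s r hr
  have hmax0 : (0:ℝ) ≤ max s 0 := le_max_right s 0
  have h1 : s * r ≤ max s 0 * r := mul_le_mul_of_nonneg_right (le_max_left s 0) hr
  have h2 : max s 0 * r = (r / α) * (max s 0 * α) := by field_simp
  have hy := Real.young_inequality_of_nonneg (div_nonneg hr hα0.le)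
    (mul_nonneg hmax0 hα0.le) hpq
  have e1 : (r / α) ^ p / p = C * r ^ p := by
    rw [div_rpow hr hα0.le, hαp]
    field_simp
  have e2 : (max s 0 * α) ^ q / q = α ^ q / q * (max s 0) ^ q := by
    rw [mul_rpow hmax0 hα0.le]
    ring
  rw [e1, e2] at hy
  calc s * r ≤ max s 0 * r := h1
    _ = (r / α) * (max s 0 * α) := h2
    _ ≤ C * r ^ p + α ^ q / q * (max s 0) ^ q := hy

lemma SS_one_lb (hk : 0 < k) (hC : 0 < C) :
    ∃ ε : ℝ, 0 < ε ∧ ∀ y ∈ SS C k 1, ε ≤ y := by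
  obtain ⟨c₀, hc₀, hyoung⟩ := pointwise_young hk hC
  set V : ℝ := (volume (Metric.ball (0:E2) 1)).toReal with hVdef
  have hV0 : 0 < V :=
    ENNReal.toReal_pos (Metric.measure_ball_pos volume (0:E2) one_pos).ne' measure_ball_lt_top.ne
  set D : ℝ := 2 * c₀ * V with hDdef
  have hD : 0 < D := by positivity
  set lam : ℝ := min 1 (2*D+1)⁻¹ with hlamdef
  have hlam0 : 0 < lam := lt_min one_pos (by positivity)
  have hlam1 : lam ≤ 1 := min_le_left _ _
  have hDlam : D * lam ^ (k+1) ≤ 1/2 := by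
    have h1 : lam ^ (k+1) ≤ lam := by
      calc lam ^ (k+1) ≤ lam ^ (1:ℝ) :=
            rpow_le_rpow_of_exponent_ge hlam0 hlam1 (by linarith)
        _ = lam := rpow_one lam
    have h2 : lam ≤ (2*D+1)⁻¹ := min_le_right _ _
    have h3 : D * (2*D+1)⁻¹ ≤ 1/2 := by
      rw [← div_eq_mul_inv, div_le_iff₀ (by positivity)]
      linarith
    calc D * lam ^ (k+1) ≤ D * lam := by nlinarith
      _ ≤ D * (2*D+1)⁻¹ := by nlinarith
      _ ≤ 1/2 := h3
  refine ⟨lam/2, by positivity, ?_⟩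
  rintro y ⟨g, hg0, hgi, hgm, hfi, hfy⟩
  set R : ℝ := Real.sqrt (2*lam) with hRdef
  have hR0 : (0:ℝ) ≤ R := sqrt_nonneg _
  have hRsq : R^2 = 2*lam := sq_sqrt (by positivity)
  set h : E2 → ℝ := fun v => (max (lam - (1/2)*‖v‖^2) 0) ^ (k+1) with hhdef
  have hhc : Continuous h := by
    apply Continuous.rpow_const
    · exact (continuous_const.sub ((continuous_const.mul ((continuous_norm.pow 2))))).max
        continuous_const
    · intro v; right; linarith
  have hsupp : ∀ v : E2, v ∉ Metric.closedBall (0:E2) R → h v = 0 := by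
    intro v hv
    have h1 : R < ‖v‖ := by
      simpa [Metric.mem_closedBall, dist_zero_right, not_le] using hv
    have h2 : 2*lam < ‖v‖^2 := by nlinarith
    have hmax : max (lam - (1/2)*‖v‖^2) 0 = 0 := max_eq_right (by nlinarith)
    rw [hhdef]
    simp only [hmax]
    exact Real.zero_rpow (by positivity)
  have hhi : Integrable h :=
    hhc.integrable_of_hasCompactSupport
      (HasCompactSupport.intro (isCompact_closedBall (0:E2) R) hsupp)
  have hh0 : ∀ v, 0 ≤ h v := fun v => rpow_nonneg (le_max_right _ _) _
  have hhb : ∀ v, h v ≤ (Metric.closedBall (0:E2) R).indicator (fun _ => lam ^ (k+1)) v := by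
    intro v
    by_cases hv : v ∈ Metric.closedBall (0:E2) R
    · rw [indicator_of_mem hv]
      refine rpow_le_rpow (le_max_right _ _) (max_le (by nlinarith [sq_nonneg ‖v‖]) hlam0.le)
        (by linarith)
    · rw [indicator_of_notMem hv, hsupp v hv]
  have hIndInt : Integrable ((Metric.closedBall (0:E2) R).indicator
      (fun _ : E2 => lam ^ (k+1))) := by
    rw [integrable_indicator_iff measurableSet_closedBall]
    exact integrableOn_const measure_closedBall_lt_top.ne
  have hInth : ∫ v, h v ≤ 2 * lam * V * lam ^ (k+1) := by
    have hvol : (volume (Metric.closedBall (0:E2) R)).toReal = 2 * lam * V := by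
      rw [Measure.addHaar_closedBall volume (0:E2) hR0, finrank_euclideanSpace_fin,
        ENNReal.toReal_mul, ENNReal.toReal_ofReal (by positivity)]
      rw [hRsq, hVdef]
    calc ∫ v, h v ≤ ∫ v, (Metric.closedBall (0:E2) R).indicator (fun _ => lam ^ (k+1)) v :=
          integral_mono hhi hIndInt hhb
      _ = (volume (Metric.closedBall (0:E2) R)).toReal * lam ^ (k+1) := by
          rw [integral_indicator_const _ measurableSet_closedBall, smul_eq_mul, measureReal_def]
      _ = 2 * lam * V * lam ^ (k+1) := by rw [hvol]
  have hpb : ∀ v : E2, lam * g v ≤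
      ((1/2)*‖v‖^2 * g v + C * (g v) ^ (1 + 1/k)) + c₀ * h v := by
    intro v
    have hy := hyoung (lam - (1/2)*‖v‖^2) (g v) (hg0 v)
    have expand : (lam - (1/2)*‖v‖^2) * g v = lam * g v - (1/2)*‖v‖^2 * g v := by ring
    rw [expand] at hy
    have : c₀ * (max (lam - (1/2)*‖v‖^2) 0) ^ (k+1) = c₀ * h v := by rw [hhdef]
    linarith [this ▸ hy]
  have hInt2 : Integrable (fun v : E2 =>
      ((1/2)*‖v‖^2 * g v + C * (g v) ^ (1 + 1/k)) + c₀ * h v) :=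
    hfi.add (hhi.const_mul c₀)
  have hmono := integral_mono (hgi.const_mul lam) hInt2 hpb
  rw [integral_const_mul, hgm, mul_one, integral_add hfi (hhi.const_mul c₀),
    integral_const_mul] at hmono
  have hfinal : lam ≤ y + c₀ * (2 * lam * V * lam ^ (k+1)) := by
    rw [hfy]
    have := mul_le_mul_of_nonneg_left hInth hc₀.le
    linarith
  have heq : c₀ * (2 * lam * V * lam ^ (k+1)) = (D * lam ^ (k+1)) * lam := by
    rw [hDdef]; ring
  have : (D * lam ^ (k+1)) * lam ≤ (1/2) * lam :=
    mul_le_mul_of_nonneg_right hDlam hlam0.le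
  linarith


lemma scale_mem' (hk : 0 < k) (hC : 0 < C) {m : ℝ} (hm : 0 < m) {r y : ℝ}
    (hy : y ∈ SS C k r) : m ^ (1 + 1/(k+1)) * y ∈ SS C k (m * r) := by
  have hk1 : (0:ℝ) < k + 1 := by linarith
  have h := scale_mem hk hC (rpow_pos_of_pos hm (k/(k+1))) hy
  set a : ℝ := m ^ (k/(k+1)) with hadef
  have e1 : a ^ (1/k) = m ^ (1/(k+1)) := by
    rw [hadef, ← rpow_mul hm.le]
    congr 1
    field_simp
  have e2 : a * a ^ (1/k) = m := by
    rw [e1, hadef, ← rpow_add hm]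
    have : k/(k+1) + 1/(k+1) = 1 := by field_simp
    rw [this, rpow_one]
  have e3 : a * a ^ (1/k) * a ^ (1/k) = m ^ (1 + 1/(k+1)) := by
    rw [e2, e1, rpow_add hm, rpow_one]
  rw [e3, e2] at h
  exact h

lemma SS_scale (hk : 0 < k) (hC : 0 < C) {ρ : ℝ} (hρ : 0 < ρ) :
    SS C k ρ = (ρ ^ (1 + 1/(k+1))) • SS C k 1 := by
  ext y
  constructor
  · intro hy
    have h := scale_mem' hk hC (inv_pos.2 hρ) hy
    rw [inv_mul_cancel₀ hρ.ne'] at h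
    refine mem_smul_set.2 ⟨(ρ⁻¹) ^ (1 + 1/(k+1)) * y, h, ?_⟩
    rw [smul_eq_mul, ← mul_assoc, ← mul_rpow hρ.le (inv_nonneg.2 hρ.le),
      mul_inv_cancel₀ hρ.ne', one_rpow, one_mul]
  · intro hy
    obtain ⟨z, hz, rfl⟩ := mem_smul_set.1 hy
    rw [smul_eq_mul]
    have h := scale_mem' hk hC hρ hz
    rwa [mul_one] at h

end Stmt7Aux

theorem stmt7 (k C : ℝ) (hk : 0 < k) (hC : 0 < C) :
    ∃ C' : ℝ, 0 < C' ∧ ∀ ρ : ℝ, 0 ≤ ρ →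
      redPsi (fun f => C * f ^ (1 + 1/k)) ρ = C' * ρ ^ (1 + 1/(k+1)) := by
  have hredPsi : ∀ r : ℝ, redPsi (fun f => C * f ^ (1 + 1/k)) r = sInf (Stmt7Aux.SS C k r) :=
    fun r => rfl
  obtain ⟨ε, hε, hlb⟩ := Stmt7Aux.SS_one_lb hk hC
  refine ⟨sInf (Stmt7Aux.SS C k 1),
    lt_of_lt_of_le hε (le_csInf (Stmt7Aux.SS_one_nonempty hk hC) hlb), ?_⟩
  intro ρ hρ
  rcases hρ.eq_or_lt with rfl | hρ'
  · rw [hredPsi, Stmt7Aux.SS_zero hk hC, csInf_singleton,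
      Real.zero_rpow (by positivity), mul_zero]
  · rw [hredPsi, Stmt7Aux.SS_scale hk hC hρ',
      Real.sInf_smul_of_nonneg (Real.rpow_nonneg hρ _), smul_eq_mul, mul_comm]
end
end
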